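/- arXiv:1603.03124 — 3 statements merged into one kernel-verified Lean document; each statement's English description precedes it below -/
import Mathlib

section
/- For every c ≥ U(0) the limit D_p(c) := lim_{r↓0} (U⁽ᶜ⁾(r) − c)/p(r) exists in ℝ ∪ {+∞} (the difference quotient is nonincreasing in r by p-concavity, and is bounded below by −(c + sup_{[0,1]}|U|)/p(1)). Moreover: D_p(c) is finite for every c > U(0); the map c ↦ D_p(c) is strictly decreasing on [U(0),∞), i.e. D_p(c₂) < D_p(c₁) whenever U(0) ≤ c₁ < c₂; and this map is continuous on [U(0),∞) as a function with values in ℝ ∪ {+∞}. -/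
open scoped Classical

/-- A function `φ : [0,1] → ℝ` is `p`-concave if `φ = ψ ∘ p` on `[0,1]` for some
continuous concave function `ψ : [0, p(1)] → ℝ`. -/
def PConcave (p φ : ℝ → ℝ) : Prop :=
  ∃ ψ : ℝ → ℝ, ContinuousOn ψ (Set.Icc 0 (p 1)) ∧ ConcaveOn ℝ (Set.Icc 0 (p 1)) ψ ∧
    ∀ r ∈ Set.Icc (0:ℝ) 1, φ r = ψ (p r)

/-- `U⁽ᶜ⁾(r)`: the pointwise infimum over all `p`-concave majorants `φ` of `U` on `[0,1]`
with `φ(0) ≥ c`. -/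
noncomputable def Uc (p U : ℝ → ℝ) (c r : ℝ) : ℝ :=
  sInf {y : ℝ | ∃ φ : ℝ → ℝ, PConcave p φ ∧ (∀ t ∈ Set.Icc (0:ℝ) 1, U t ≤ φ t) ∧
    c ≤ φ 0 ∧ y = φ r}

namespace UcProof

lemma affine_concaveOn (s : Set ℝ) (hs : Convex ℝ s) (k m : ℝ) :
    ConcaveOn ℝ s (fun x => k + m * x) := by
  refine ⟨hs, fun x hx y hy a b ha hb hab => le_of_eq ?_⟩
  simp only [smul_eq_mul]
  linear_combination k * hab

variable {p U : ℝ → ℝ}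

def Adm (p U : ℝ → ℝ) (c : ℝ) (φ : ℝ → ℝ) : Prop :=
  PConcave p φ ∧ (∀ t ∈ Set.Icc (0:ℝ) 1, U t ≤ φ t) ∧ c ≤ φ 0

def ASet (p U : ℝ → ℝ) (c r : ℝ) : Set ℝ := {y : ℝ | ∃ φ : ℝ → ℝ, Adm p U c φ ∧ y = φ r}

lemma Uc_def (c r : ℝ) : Uc p U c r = sInf (ASet p U c r) := by
  unfold Uc ASet Adm
  congr 1; ext y
  constructor
  · rintro ⟨φ, h1, h2, h3, h4⟩; exact ⟨φ, ⟨h1, h2, h3⟩, h4⟩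
  · rintro ⟨φ, ⟨h1, h2, h3⟩, h4⟩; exact ⟨φ, h1, h2, h3, h4⟩

section Core

lemma p_nonneg (hpm : StrictMonoOn p (Set.Icc 0 1)) (hp0 : p 0 = 0) {r : ℝ} (hr : r ∈ Set.Icc (0:ℝ) 1) : 0 ≤ p r := by
  rcases eq_or_lt_of_le hr.1 with h | h
  · simp [← h, hp0]
  · have := hpm (Set.left_mem_Icc.2 zero_le_one) hr h
    simpa [hp0] using this.le

lemma p_pos (hpm : StrictMonoOn p (Set.Icc 0 1)) (hp0 : p 0 = 0) {r : ℝ} (hr : r ∈ Set.Ioc (0:ℝ) 1) : 0 < p r := by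
  have := hpm (Set.left_mem_Icc.2 zero_le_one) ⟨hr.1.le, hr.2⟩ hr.1
  simpa [hp0] using this

lemma p_le (hpm : StrictMonoOn p (Set.Icc 0 1)) {r s : ℝ} (hr : r ∈ Set.Icc (0:ℝ) 1) (hs : s ∈ Set.Icc (0:ℝ) 1)
    (hrs : r ≤ s) : p r ≤ p s := by
  rcases eq_or_lt_of_le hrs with h | h
  · simp [h]
  · exact (hpm hr hs h).le

lemma p_one_pos (hpm : StrictMonoOn p (Set.Icc 0 1)) (hp0 : p 0 = 0) : 0 < p 1 := p_pos hpm hp0 ⟨zero_lt_one, le_refl 1⟩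

/-- A uniform bound on U. -/
lemma exists_bound (hU : ContinuousOn U (Set.Icc 0 1)) : ∃ M₀ : ℝ, ∀ t ∈ Set.Icc (0:ℝ) 1, U t ≤ M₀ := by
  obtain ⟨M₀, hM₀⟩ := isCompact_Icc.exists_bound_of_continuousOn hU
  exact ⟨M₀, fun t ht => (le_abs_self _).trans (by simpa [Real.norm_eq_abs] using hM₀ t ht)⟩

lemma adm_const {M c : ℝ} (hM : ∀ t ∈ Set.Icc (0:ℝ) 1, U t ≤ M) (hcM : c ≤ M) :
    Adm p U c (fun _ => M) :=
  ⟨⟨fun _ => M, continuousOn_const, concaveOn_const _ (convex_Icc _ _), fun _ _ => rfl⟩,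
    hM, hcM⟩

lemma ASet_nonempty (hU : ContinuousOn U (Set.Icc 0 1)) (c r : ℝ) :
    (ASet p U c r).Nonempty := by
  obtain ⟨M₀, hM₀⟩ := exists_bound hU
  exact ⟨max M₀ c, fun _ => max M₀ c,
    adm_const (fun t ht => (hM₀ t ht).trans (le_max_left _ _)) (le_max_right _ _), rfl⟩

lemma ASet_bddBelow (c : ℝ) {r : ℝ} (hr : r ∈ Set.Icc (0:ℝ) 1) :
    BddBelow (ASet p U c r) := by
  refine ⟨U r, ?_⟩
  rintro y ⟨φ, ⟨_, hmaj, _⟩, rfl⟩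
  exact hmaj r hr

lemma Uc_le {c : ℝ} {φ : ℝ → ℝ} (hφ : Adm p U c φ) {r : ℝ} (hr : r ∈ Set.Icc (0:ℝ) 1) :
    Uc p U c r ≤ φ r := by
  rw [Uc_def]
  exact csInf_le (ASet_bddBelow c hr) ⟨φ, hφ, rfl⟩

lemma le_Uc (hU : ContinuousOn U (Set.Icc 0 1)) {c b r : ℝ}
    (h : ∀ φ : ℝ → ℝ, Adm p U c φ → b ≤ φ r) : b ≤ Uc p U c r := by
  rw [Uc_def]
  refine le_csInf (ASet_nonempty hU c r) ?_
  rintro y ⟨φ, hφ, rfl⟩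
  exact h φ hφ

end Core
end UcProof

namespace UcProof2
open UcProof Set

variable {p U : ℝ → ℝ}

/-- the difference quotient -/
noncomputable def gq (p U : ℝ → ℝ) (c r : ℝ) : ℝ := (Uc p U c r - c) / p r

/-- (I) antitonicity of the difference quotient in r -/
lemma gq_antitone (hpm : StrictMonoOn p (Set.Icc 0 1)) (hp0 : p 0 = 0)
    (hU : ContinuousOn U (Set.Icc 0 1)) {c r s : ℝ}
    (hr : r ∈ Set.Ioc (0:ℝ) 1) (hs : s ∈ Set.Ioc (0:ℝ) 1) (hrs : r ≤ s) :
    gq p U c s ≤ gq p U c r := by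
  have hrI : r ∈ Set.Icc (0:ℝ) 1 := ⟨hr.1.le, hr.2⟩
  have hsI : s ∈ Set.Icc (0:ℝ) 1 := ⟨hs.1.le, hs.2⟩
  have hpr : 0 < p r := p_pos hpm hp0 hr
  have hps : 0 < p s := p_pos hpm hp0 hs
  have hprs : p r ≤ p s := p_le hpm hrI hsI hrs
  have hp1 : 0 < p 1 := p_one_pos hpm hp0
  set t : ℝ := p r / p s with ht
  have ht0 : 0 ≤ t := div_nonneg hpr.le hps.le
  have ht1 : t ≤ 1 := div_le_one_of_le₀ hprs hps.le
  have key : c + t * (Uc p U c s - c) ≤ Uc p U c r := by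
    refine le_Uc hU fun φ hφ => ?_
    obtain ⟨⟨ψ, hψc, hψcc, hψeq⟩, hmaj, hφ0⟩ := hφ
    have h0m : (0:ℝ) ∈ Set.Icc 0 (p 1) := ⟨le_refl _, hp1.le⟩
    have hpsm : p s ∈ Set.Icc 0 (p 1) := ⟨hps.le, p_le hpm hsI ⟨zero_le_one, le_refl 1⟩ hs.2⟩
    have hconc := hψcc.2 h0m hpsm (by linarith : (0:ℝ) ≤ 1 - t) ht0 (by ring)
    simp only [smul_eq_mul, mul_zero, zero_add] at hconc
    have hts : t * p s = p r := div_mul_cancel₀ _ hps.ne'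
    rw [hts] at hconc
    have hψ0 : c ≤ ψ 0 := by
      have h00 := hψeq 0 ⟨le_refl _, zero_le_one⟩
      rw [hp0] at h00
      rw [← h00]; exact hφ0
    have hφr : φ r = ψ (p r) := hψeq r hrI
    have hφs : φ s = ψ (p s) := hψeq s hsI
    have hUcs : Uc p U c s ≤ φ s :=
      Uc_le ⟨⟨ψ, hψc, hψcc, hψeq⟩, hmaj, hφ0⟩ hsI
    rw [hφr]
    rw [hφs] at hUcs
    nlinarith [mul_le_mul_of_nonneg_left hUcs ht0]
  unfold gq
  rw [div_le_div_iff₀ hps hpr]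
  have h4 := mul_le_mul_of_nonneg_right (by linarith : t * (Uc p U c s - c) ≤ Uc p U c r - c) hps.le
  have h3 : t * (Uc p U c s - c) * p s = (Uc p U c s - c) * p r := by
    have hc := div_mul_cancel₀ (p r) hps.ne'
    rw [ht]; linear_combination (Uc p U c s - c) * hc
  nlinarith [h4, h3]

/-- continuity of U at 0 gives a small interval where U ≤ c -/
lemma exists_delta (hU : ContinuousOn U (Set.Icc 0 1)) {c : ℝ} (hc : U 0 < c) :
    ∃ δ : ℝ, 0 < δ ∧ δ ≤ 1 ∧ ∀ t ∈ Set.Icc (0:ℝ) δ, U t ≤ c := by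
  have h0 : (0:ℝ) ∈ Set.Icc (0:ℝ) 1 := ⟨le_refl _, zero_le_one⟩
  have hev : ∀ᶠ t in nhdsWithin 0 (Set.Icc (0:ℝ) 1), U t < c :=
    (hU 0 h0).eventually_lt_const hc
  rw [eventually_nhdsWithin_iff] at hev
  obtain ⟨ε, hε, hball⟩ := Metric.eventually_nhds_iff.mp hev
  refine ⟨min (ε/2) 1, by positivity, min_le_right _ _, fun t ht => ?_⟩
  have ht1 : t ≤ 1 := ht.2.trans (min_le_right _ _)
  have htε : dist t 0 < ε := by
    rw [Real.dist_eq, sub_zero, abs_of_nonneg ht.1]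
    have := ht.2.trans (min_le_left _ _)
    linarith
  exact (hball htε ⟨ht.1, ht1⟩).le

/-- (II) the difference quotient is bounded above when c > U 0 -/
lemma slope_upper (hpm : StrictMonoOn p (Set.Icc 0 1)) (hp0 : p 0 = 0)
    (hU : ContinuousOn U (Set.Icc 0 1)) {c : ℝ} (hc : U 0 < c) :
    ∃ K : ℝ, 0 ≤ K ∧ ∀ r ∈ Set.Ioc (0:ℝ) 1, gq p U c r ≤ K := by
  obtain ⟨M₀, hM₀⟩ := exists_bound hU
  obtain ⟨δ, hδ0, hδ1, hδ⟩ := exists_delta hU hc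
  have hpδ : 0 < p δ := p_pos hpm hp0 ⟨hδ0, hδ1⟩
  set K : ℝ := max 0 ((M₀ - c) / p δ) with hK
  have hK0 : 0 ≤ K := le_max_left _ _
  refine ⟨K, hK0, fun r hr => ?_⟩
  have hpr : 0 < p r := p_pos hpm hp0 hr
  have hadm : Adm p U c (fun t => c + K * p t) := by
    refine ⟨⟨fun x => c + K * x, by fun_prop,
      affine_concaveOn _ (convex_Icc _ _) c K, fun r hr => rfl⟩, ?_, ?_⟩
    · intro t ht
      by_cases hle : t ≤ δ
      · have h1 := hδ t ⟨ht.1, hle⟩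
        have h2 := p_nonneg hpm hp0 ht
        show U t ≤ c + K * p t
        nlinarith [mul_nonneg hK0 h2]
      · push_neg at hle
        have hpt : p δ ≤ p t := p_le hpm ⟨hδ0.le, hδ1⟩ ht hle.le
        have h1 : (M₀ - c) / p δ ≤ K := le_max_right _ _
        have h2 : M₀ - c ≤ K * p δ := by
          rw [div_le_iff₀ hpδ] at h1; linarith
        have h3 : K * p δ ≤ K * p t := mul_le_mul_of_nonneg_left hpt hK0
        have := hM₀ t ht
        show U t ≤ c + K * p t
        linarith
    · simp [hp0]
  have hle : Uc p U c r ≤ c + K * p r :=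
    Uc_le hadm ⟨hr.1.le, hr.2⟩
  unfold gq
  rw [div_le_iff₀ hpr]
  linarith

end UcProof2

namespace UcProof3
open UcProof UcProof2 Set

variable {p U : ℝ → ℝ}

/-- (III) shift inequality: raising c by d lowers the quotient by at least d / p 1 -/
lemma gq_shift (hpm : StrictMonoOn p (Set.Icc 0 1)) (hp0 : p 0 = 0)
    (hU : ContinuousOn U (Set.Icc 0 1)) {c₁ c₂ : ℝ} (h12 : c₁ ≤ c₂) {r : ℝ}
    (hr : r ∈ Set.Ioc (0:ℝ) 1) :
    gq p U c₂ r + (c₂ - c₁) / p 1 ≤ gq p U c₁ r := by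
  have hrI : r ∈ Set.Icc (0:ℝ) 1 := ⟨hr.1.le, hr.2⟩
  have hpr : 0 < p r := p_pos hpm hp0 hr
  have hp1 : 0 < p 1 := p_one_pos hpm hp0
  have hprl : p r ≤ p 1 := p_le hpm hrI ⟨zero_le_one, le_refl 1⟩ hr.2
  set d : ℝ := c₂ - c₁ with hd
  have hd0 : 0 ≤ d := by simp [hd]; linarith
  set m : ℝ := -(d / p 1) with hm
  clear_value m
  clear_value d
  have key : Uc p U c₂ r - (d + m * p r) ≤ Uc p U c₁ r := by
    refine le_Uc hU fun φ hφ => ?_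
    obtain ⟨⟨ψ, hψc, hψcc, hψeq⟩, hmaj, hφ0⟩ := hφ
    have hadm : Adm p U c₂ (fun t => φ t + (d + m * p t)) := by
      refine ⟨⟨fun x => ψ x + (d + m * x), hψc.add (by fun_prop),
        hψcc.add (affine_concaveOn _ (convex_Icc _ _) d m), fun t ht => by simp only []; rw [hψeq t ht]⟩,
        ?_, ?_⟩
      · intro t ht
        have hpt0 : 0 ≤ p t := p_nonneg hpm hp0 ht
        have hptl : p t ≤ p 1 := p_le hpm ht ⟨zero_le_one, le_refl 1⟩ ht.2
        have hnn : 0 ≤ d + m * p t := by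
          rw [hm]
          have : d / p 1 * p t ≤ d / p 1 * p 1 :=
            mul_le_mul_of_nonneg_left hptl (div_nonneg hd0 hp1.le)
          rw [div_mul_cancel₀ _ hp1.ne'] at this
          nlinarith
        have := hmaj t ht
        show U t ≤ φ t + (d + m * p t)
        linarith
      · have : d + m * p 0 = d := by rw [hp0]; ring
        show c₂ ≤ φ 0 + (d + m * p 0)
        rw [this]
        linarith
    have h2 : Uc p U c₂ r ≤ φ r + (d + m * p r) := Uc_le hadm hrI
    linarith
  unfold gq
  rw [div_add_div _ _ hpr.ne' hp1.ne', div_le_div_iff₀ (mul_pos hpr hp1) hpr]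
  have hmr : m * p r = -(d * p r / p 1) := by rw [hm]; ring
  have e1 : d * p r / p 1 * p 1 = d * p r := div_mul_cancel₀ _ hp1.ne'
  nlinarith [mul_le_mul_of_nonneg_right (by linarith [key, hmr, hd] :
    Uc p U c₂ r - c₂ + d * p r / p 1 ≤ Uc p U c₁ r - c₁) (mul_pos hpr hp1).le,
    mul_pos hpr hp1, e1]

/-- (IV) Uc is monotone in c -/
lemma Uc_mono_c (hU : ContinuousOn U (Set.Icc 0 1)) {c₁ c₂ : ℝ} (h : c₁ ≤ c₂) {r : ℝ}
    (hr : r ∈ Set.Icc (0:ℝ) 1) : Uc p U c₁ r ≤ Uc p U c₂ r := by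
  rw [Uc_def, Uc_def]
  refine csInf_le_csInf (ASet_bddBelow c₁ hr) (ASet_nonempty hU c₂ r) ?_
  rintro y ⟨φ, ⟨hpc, hmaj, hc₂⟩, rfl⟩
  exact ⟨φ, ⟨hpc, hmaj, h.trans hc₂⟩, rfl⟩

/-- (V) Uc is convex in c -/
lemma Uc_convex_c (hU : ContinuousOn U (Set.Icc 0 1)) {c₀ c₁ l : ℝ}
    (hl0 : 0 ≤ l) (hl1 : l ≤ 1) {r : ℝ} (hr : r ∈ Set.Icc (0:ℝ) 1) :
    Uc p U ((1 - l) * c₀ + l * c₁) r ≤ (1 - l) * Uc p U c₀ r + l * Uc p U c₁ r := by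
  refine le_of_forall_pos_le_add fun ε hε => ?_
  have h0 : sInf (ASet p U c₀ r) < Uc p U c₀ r + ε := by
    rw [← Uc_def]; linarith
  have h1 : sInf (ASet p U c₁ r) < Uc p U c₁ r + ε := by
    rw [← Uc_def]; linarith
  obtain ⟨y₀, ⟨φ₀, hφ₀, rfl⟩, hy₀⟩ := exists_lt_of_csInf_lt (ASet_nonempty hU c₀ r) h0
  obtain ⟨y₁, ⟨φ₁, hφ₁, rfl⟩, hy₁⟩ := exists_lt_of_csInf_lt (ASet_nonempty hU c₁ r) h1
  obtain ⟨⟨ψ₀, hψ₀c, hψ₀cc, hψ₀eq⟩, hmaj₀, hc₀'⟩ := hφ₀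
  obtain ⟨⟨ψ₁, hψ₁c, hψ₁cc, hψ₁eq⟩, hmaj₁, hc₁'⟩ := hφ₁
  have hadm : Adm p U ((1 - l) * c₀ + l * c₁) (fun t => (1 - l) * φ₀ t + l * φ₁ t) := by
    refine ⟨⟨fun x => (1 - l) * ψ₀ x + l * ψ₁ x,
      (continuousOn_const.mul hψ₀c).add (continuousOn_const.mul hψ₁c), ?_,
      fun t ht => by simp only []; rw [hψ₀eq t ht, hψ₁eq t ht]⟩, ?_, ?_⟩
    · refine ⟨convex_Icc _ _, fun x hx y hy a b ha hb hab => ?_⟩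
      have h0 := hψ₀cc.2 hx hy ha hb hab
      have h1 := hψ₁cc.2 hx hy ha hb hab
      simp only [smul_eq_mul] at *
      nlinarith [mul_le_mul_of_nonneg_left h0 (by linarith : (0:ℝ) ≤ 1 - l),
        mul_le_mul_of_nonneg_left h1 hl0]
    · intro t ht
      have h0 := hmaj₀ t ht
      have h1 := hmaj₁ t ht
      show U t ≤ (1 - l) * φ₀ t + l * φ₁ t
      nlinarith
    · show (1 - l) * c₀ + l * c₁ ≤ (1 - l) * φ₀ 0 + l * φ₁ 0
      nlinarith
  have := Uc_le hadm hr
  nlinarith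

end UcProof3

namespace UcProof4
open UcProof UcProof2 UcProof3 Set Filter

variable {p U : ℝ → ℝ}

noncomputable def D (p U : ℝ → ℝ) (c : ℝ) : EReal :=
  ⨆ r : Set.Ioc (0:ℝ) 1, ((gq p U c r : ℝ) : EReal)

lemma gq_le_D {c r : ℝ} (hr : r ∈ Set.Ioc (0:ℝ) 1) :
    ((gq p U c r : ℝ) : EReal) ≤ D p U c :=
  le_iSup (fun q : Set.Ioc (0:ℝ) 1 => ((gq p U c q : ℝ) : EReal)) ⟨r, hr⟩

lemma D_ne_bot (c : ℝ) : D p U c ≠ ⊥ :=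
  ((EReal.bot_lt_coe (gq p U c 1)).trans_le (gq_le_D ⟨zero_lt_one, le_refl 1⟩)).ne'

lemma D_le_of_forall {c K : ℝ} (h : ∀ r ∈ Set.Ioc (0:ℝ) 1, gq p U c r ≤ K) :
    D p U c ≤ (K : EReal) :=
  iSup_le fun q => EReal.coe_le_coe_iff.2 (h q q.2)

lemma D_finite (hpm : StrictMonoOn p (Set.Icc 0 1)) (hp0 : p 0 = 0)
    (hU : ContinuousOn U (Set.Icc 0 1)) {c : ℝ} (hc : U 0 < c) :
    ∃ x : ℝ, D p U c = (x : EReal) := by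
  obtain ⟨K, _, hK⟩ := slope_upper hpm hp0 hU hc
  have htop : D p U c ≠ ⊤ :=
    ((D_le_of_forall hK).trans_lt (EReal.coe_lt_top K)).ne
  exact ⟨(D p U c).toReal, (EReal.coe_toReal htop (D_ne_bot c)).symm⟩

lemma D_mono (hpm : StrictMonoOn p (Set.Icc 0 1)) (hp0 : p 0 = 0)
    (hU : ContinuousOn U (Set.Icc 0 1)) {c₁ c₂ : ℝ} (h : c₁ ≤ c₂) :
    D p U c₂ ≤ D p U c₁ := by
  refine iSup_le fun q => ?_
  have hk : 0 ≤ (c₂ - c₁) / p 1 := div_nonneg (by linarith) (p_one_pos hpm hp0).le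
  have := gq_shift hpm hp0 hU h q.2
  exact (EReal.coe_le_coe_iff.2 (by linarith)).trans (gq_le_D q.2)

lemma tendsto_D (hpm : StrictMonoOn p (Set.Icc 0 1)) (hp0 : p 0 = 0)
    (hU : ContinuousOn U (Set.Icc 0 1)) (c : ℝ) :
    Tendsto (fun r : ℝ => (((Uc p U c r - c) / p r : ℝ) : EReal))
      (nhdsWithin 0 (Set.Ioi 0)) (nhds (D p U c)) := by
  have heq : (fun r : ℝ => (((Uc p U c r - c) / p r : ℝ) : EReal)) =
      fun r : ℝ => ((gq p U c r : ℝ) : EReal) := rfl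
  rw [heq]
  refine tendsto_order.2 ⟨fun l hl => ?_, fun u hu => ?_⟩
  · obtain ⟨⟨r₀, hr₀⟩, hlr₀⟩ := lt_iSup_iff.mp hl
    filter_upwards [Ioo_mem_nhdsGT_of_mem
      (⟨le_refl (0:ℝ), hr₀.1⟩ : (0:ℝ) ∈ Set.Ico (0:ℝ) r₀)] with r hr
    have hrm : r ∈ Set.Ioc (0:ℝ) 1 := ⟨hr.1, hr.2.le.trans hr₀.2⟩
    have hg : gq p U c r₀ ≤ gq p U c r := gq_antitone hpm hp0 hU hrm hr₀ hr.2.le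
    exact hlr₀.trans_le (EReal.coe_le_coe_iff.2 hg)
  · filter_upwards [Ioo_mem_nhdsGT_of_mem
      (⟨le_refl (0:ℝ), zero_lt_one⟩ : (0:ℝ) ∈ Set.Ico (0:ℝ) 1)] with r hr
    exact (gq_le_D ⟨hr.1, hr.2.le⟩).trans_lt hu

lemma D_strictAnti (hpm : StrictMonoOn p (Set.Icc 0 1)) (hp0 : p 0 = 0)
    (hU : ContinuousOn U (Set.Icc 0 1)) :
    StrictAntiOn (D p U) (Set.Ici (U 0)) := by
  intro c₁ hc₁ c₂ hc₂ h12
  have hc₂' : U 0 < c₂ := lt_of_le_of_lt hc₁ h12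
  obtain ⟨x₂, hx₂⟩ := D_finite hpm hp0 hU hc₂'
  have hp1 : 0 < p 1 := p_one_pos hpm hp0
  have hk : 0 < (c₂ - c₁) / p 1 := div_pos (by linarith) hp1
  by_cases htop : D p U c₁ = ⊤
  · rw [htop, hx₂]; exact EReal.coe_lt_top x₂
  · obtain ⟨x₁, hx₁⟩ : ∃ x : ℝ, D p U c₁ = (x : EReal) :=
      ⟨(D p U c₁).toReal, (EReal.coe_toReal htop (D_ne_bot c₁)).symm⟩
    have hb : ∀ r ∈ Set.Ioc (0:ℝ) 1, gq p U c₂ r ≤ x₁ - (c₂ - c₁) / p 1 := by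
      intro r hr
      have h1 := gq_shift hpm hp0 hU h12.le hr
      have h2 : gq p U c₁ r ≤ x₁ :=
        EReal.coe_le_coe_iff.1 (hx₁ ▸ gq_le_D hr)
      linarith
    have := D_le_of_forall hb
    rw [hx₂, hx₁]
    rw [hx₂] at this
    have hx : x₂ ≤ x₁ - (c₂ - c₁) / p 1 := EReal.coe_le_coe_iff.1 this
    exact_mod_cast (by linarith : x₂ < x₁)

end UcProof4

namespace UcProof5
open UcProof UcProof2 UcProof3 UcProof4 Set Filter

variable {p U : ℝ → ℝ}

lemma ereal_btwn_right {x : ℝ} {u : EReal} (h : (x : EReal) < u) :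
    ∃ m : ℝ, x < m ∧ (m : EReal) < u := by
  induction u using EReal.rec with
  | bot => exact absurd h (by simp)
  | coe y =>
    have hxy : x < y := EReal.coe_lt_coe_iff.1 h
    exact ⟨(x + y) / 2, by linarith, by exact_mod_cast (by linarith : (x + y) / 2 < y)⟩
  | top => exact ⟨x + 1, by linarith, by exact_mod_cast EReal.coe_lt_top _⟩

lemma ereal_btwn_left {x : ℝ} {l : EReal} (h : l < (x : EReal)) :
    ∃ m : ℝ, l < (m : EReal) ∧ m < x := by
  induction l using EReal.rec with
  | bot => exact ⟨x - 1, by exact_mod_cast EReal.bot_lt_coe _, by linarith⟩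
  | coe y =>
    have hxy : y < x := EReal.coe_lt_coe_iff.1 h
    exact ⟨(y + x) / 2, by exact_mod_cast (by linarith : y < (y + x) / 2), by linarith⟩
  | top => exact absurd h (by simp)

lemma D_contOn (hpm : StrictMonoOn p (Set.Icc 0 1)) (hp0 : p 0 = 0)
    (hU : ContinuousOn U (Set.Icc 0 1)) :
    ContinuousOn (D p U) (Set.Ici (U 0)) := by
  intro c₁ hc₁
  have hp1 : 0 < p 1 := p_one_pos hpm hp0
  rw [ContinuousWithinAt]
  refine tendsto_order.2 ⟨fun l hl => ?_, fun u hu => ?_⟩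
  · -- lower bound: l < D c eventually
    obtain ⟨⟨r₀, hr₀⟩, hlr₀⟩ := lt_iSup_iff.mp hl
    obtain ⟨m, hlm, hmx⟩ := ereal_btwn_left hlr₀
    have hpr₀ : 0 < p r₀ := p_pos hpm hp0 hr₀
    have hr₀I : r₀ ∈ Set.Icc (0:ℝ) 1 := ⟨hr₀.1.le, hr₀.2⟩
    set ε : ℝ := p r₀ * (gq p U c₁ r₀ - m) with hε
    have hε0 : 0 < ε := mul_pos hpr₀ (by linarith)
    have hnb : Set.Iio (c₁ + ε) ∈ nhdsWithin c₁ (Set.Ici (U 0)) :=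
      nhdsWithin_le_nhds (Iio_mem_nhds (by linarith))
    filter_upwards [hnb] with c hc
    have hmg : m < gq p U c r₀ := by
      by_cases hcc : c ≤ c₁
      · have h1 := gq_shift hpm hp0 hU hcc hr₀
        have h2 : 0 ≤ (c₁ - c) / p 1 := div_nonneg (by linarith) hp1.le
        linarith
      · push_neg at hcc
        have h1 : Uc p U c₁ r₀ ≤ Uc p U c r₀ := Uc_mono_c hU hcc.le hr₀I
        have hlow : (Uc p U c₁ r₀ - c) / p r₀ ≤ gq p U c r₀ := by
          unfold gq; gcongr
        have e : gq p U c₁ r₀ * p r₀ = Uc p U c₁ r₀ - c₁ := by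
          unfold gq; field_simp
        have hc' : c < c₁ + ε := hc
        have : m < (Uc p U c₁ r₀ - c) / p r₀ := by
          rw [lt_div_iff₀ hpr₀]
          nlinarith
        linarith
    exact hlm.trans_le ((EReal.coe_le_coe_iff.2 hmg.le).trans (gq_le_D hr₀))
  · -- upper bound: D c < u eventually
    rcases eq_or_lt_of_le (Set.mem_Ici.mp hc₁) with hceq | hclt
    · -- c₁ = U 0 : only right approach matters
      filter_upwards [self_mem_nhdsWithin] with c hc
      exact (D_mono hpm hp0 hU (hceq ▸ hc)).trans_lt hu
    · -- U 0 < c₁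
      obtain ⟨x₁, hx₁⟩ := D_finite hpm hp0 hU hclt
      set c₀ : ℝ := (U 0 + c₁) / 2 with hc₀
      have hc₀l : U 0 < c₀ := by rw [hc₀]; linarith
      have hc₀r : c₀ < c₁ := by rw [hc₀]; linarith
      obtain ⟨x₀, hx₀⟩ := D_finite hpm hp0 hU hc₀l
      have hux : (x₁ : EReal) < u := hx₁ ▸ hu
      obtain ⟨u', hx₁u', hu'u⟩ := ereal_btwn_right hux
      set A : ℝ := |x₀ - x₁| + 1 with hA
      have hA0 : 0 < A := by rw [hA]; positivity
      set η : ℝ := (c₁ - c₀) * (u' - x₁) / A with hη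
      have hη0 : 0 < η := div_pos (mul_pos (by linarith) (by linarith)) hA0
      have hmaxlt : max c₀ (c₁ - η) < c₁ := max_lt hc₀r (by linarith)
      have hnb : Set.Ioo (max c₀ (c₁ - η)) (c₁ + 1) ∈ nhdsWithin c₁ (Set.Ici (U 0)) :=
        nhdsWithin_le_nhds (Ioo_mem_nhds hmaxlt (by linarith))
      filter_upwards [hnb] with c hc
      by_cases hcc : c₁ ≤ c
      · exact (D_mono hpm hp0 hU hcc).trans_lt hu
      · push_neg at hcc
        have hc₀c : c₀ < c := (le_max_left _ _).trans_lt hc.1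
        have hcη : c₁ - η < c := (le_max_right _ _).trans_lt hc.1
        set l : ℝ := (c - c₀) / (c₁ - c₀) with hldef
        have hden : 0 < c₁ - c₀ := by linarith
        have hl0 : 0 ≤ l := le_of_lt (div_pos (by linarith) hden)
        have hl1 : l ≤ 1 := (div_le_one hden).2 (by linarith)
        have hcomb : (1 - l) * c₀ + l * c₁ = c := by
          rw [hldef]; field_simp; ring
        have h1l : 1 - l = (c₁ - c) / (c₁ - c₀) := by
          rw [hldef]; field_simp; ring
        have hgb : ∀ r ∈ Set.Ioc (0:ℝ) 1, gq p U c r ≤ (1 - l) * x₀ + l * x₁ := by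
          intro r hr
          have hrI : r ∈ Set.Icc (0:ℝ) 1 := ⟨hr.1.le, hr.2⟩
          have hpr : 0 < p r := p_pos hpm hp0 hr
          have hcv := Uc_convex_c (p := p) (c₀ := c₀) (c₁ := c₁) hU hl0 hl1 hrI
          rw [hcomb] at hcv
          have hg0 : gq p U c₀ r ≤ x₀ := EReal.coe_le_coe_iff.1 (hx₀ ▸ gq_le_D hr)
          have hg1 : gq p U c₁ r ≤ x₁ := EReal.coe_le_coe_iff.1 (hx₁ ▸ gq_le_D hr)
          have e0 : Uc p U c₀ r - c₀ ≤ x₀ * p r := by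
            unfold gq at hg0; rw [div_le_iff₀ hpr] at hg0; linarith
          have e1 : Uc p U c₁ r - c₁ ≤ x₁ * p r := by
            unfold gq at hg1; rw [div_le_iff₀ hpr] at hg1; linarith
          unfold gq
          rw [div_le_iff₀ hpr]
          nlinarith [mul_le_mul_of_nonneg_left e0 (by linarith : (0:ℝ) ≤ 1 - l),
            mul_le_mul_of_nonneg_left e1 hl0]
        have hDle : D p U c ≤ (((1 - l) * x₀ + l * x₁ : ℝ) : EReal) :=
          D_le_of_forall hgb
        have hkey : (1 - l) * A < u' - x₁ := by
          rw [h1l, div_mul_eq_mul_div, div_lt_iff₀ hden]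
          have eη : η * A = (c₁ - c₀) * (u' - x₁) := by
            rw [hη]; field_simp
          nlinarith [hcη, hA0]
        have hlt : (1 - l) * x₀ + l * x₁ < u' := by
          have habs : (1 - l) * (x₀ - x₁) ≤ (1 - l) * |x₀ - x₁| :=
            mul_le_mul_of_nonneg_left (le_abs_self _) (by linarith)
          have hstep : (1 - l) * |x₀ - x₁| ≤ (1 - l) * A := by
            rw [hA]; nlinarith
          have hexp : (1 - l) * x₀ + l * x₁ = x₁ + (1 - l) * (x₀ - x₁) := by ring
          linarith
        calc D p U c ≤ (((1 - l) * x₀ + l * x₁ : ℝ) : EReal) := hDle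
          _ < (u' : EReal) := EReal.coe_lt_coe_iff.2 hlt
          _ < u := hu'u

end UcProof5


/-- There is a function `D : [U(0),∞) → ℝ ∪ {+∞}`, `D(c) = lim_{r↓0} (U⁽ᶜ⁾(r) − c)/p(r)`
(the limit exists), which is finite for `c > U(0)`, strictly decreasing, and continuous
on `[U(0),∞)`. -/
theorem Uc_slope_at_origin_properties (p U : ℝ → ℝ)
    (hpc : ContinuousOn p (Set.Icc 0 1)) (hpm : StrictMonoOn p (Set.Icc 0 1))
    (hp0 : p 0 = 0)
    (hU : ContinuousOn U (Set.Icc 0 1)) :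
    ∃ D : ℝ → EReal,
      (∀ c : ℝ, U 0 ≤ c → D c ≠ ⊥ ∧
        Filter.Tendsto (fun r : ℝ => (((Uc p U c r - c) / p r : ℝ) : EReal))
          (nhdsWithin 0 (Set.Ioi 0)) (nhds (D c))) ∧
      (∀ c : ℝ, U 0 < c → ∃ x : ℝ, D c = (x : EReal)) ∧
      StrictAntiOn D (Set.Ici (U 0)) ∧
      ContinuousOn D (Set.Ici (U 0)) := by
  refine ⟨UcProof4.D p U, fun c _ => ⟨UcProof4.D_ne_bot c,
      UcProof4.tendsto_D hpm hp0 hU c⟩,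
    fun c hc => UcProof4.D_finite hpm hp0 hU hc,
    UcProof4.D_strictAnti hpm hp0 hU,
    UcProof5.D_contOn hpm hp0 hU⟩
end

section
/- For every c ≥ U(0) and every r ∈ [0,1], the smallest p-concave majorant admits the countable affine representation U⁽ᶜ⁾(r) = inf{ a·p(r) + b : a, b ∈ ℚ, b ≥ c, and a·p(s) + b ≥ U(s) for all s ∈ [0,1] } (the family of such rational pairs (a,b) is nonempty). -/
open scoped Classical

lemma affine_concave (a b : ℝ) (s : Set ℝ) (hs : Convex ℝ s) :
    ConcaveOn ℝ s (fun x => a * x + b) := by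
  refine ⟨hs, ?_⟩
  intro x _ y _ μ ν hμ hν h1
  simp only [smul_eq_mul]
  have h : μ * (a * x + b) + ν * (a * y + b) = a * (μ * x + ν * y) + b := by
    linear_combination b * h1
  exact le_of_eq h

lemma exists_affine_majorant (ψ : ℝ → ℝ) (L : ℝ) (hL : 0 < L)
    (hcont : ContinuousOn ψ (Set.Icc 0 L)) (hconc : ConcaveOn ℝ (Set.Icc 0 L) ψ)
    (x0 : ℝ) (hx0 : x0 ∈ Set.Icc 0 L) (ε : ℝ) (hε : 0 < ε) :
    ∃ a b : ℝ, (∀ x ∈ Set.Icc 0 L, ψ x ≤ a * x + b) ∧ a * x0 + b ≤ ψ x0 + ε := by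
  obtain ⟨δ, hδ, hδ2⟩ := Metric.continuousWithinAt_iff.mp (hcont x0 hx0) (ε/2) (by linarith)
  obtain ⟨x1, hx1mem, hx1ne, hx1close⟩ :
      ∃ x1, x1 ∈ Set.Icc 0 L ∧ x1 ≠ x0 ∧ |x1 - x0| < δ := by
    rcases lt_or_eq_of_le hx0.2 with h | h
    · refine ⟨min (x0 + δ/2) L, ⟨le_min (by linarith [hx0.1]) hL.le, min_le_right _ _⟩, ?_, ?_⟩
      · have : x0 < min (x0 + δ/2) L := lt_min (by linarith) h
        exact ne_of_gt this
      · have h1 : x0 < min (x0 + δ/2) L := lt_min (by linarith) h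
        have h2 : min (x0 + δ/2) L - x0 ≤ δ/2 := by
          have := min_le_left (x0 + δ/2) L; linarith
        rw [abs_of_pos (by linarith)]; linarith
    · subst h
      refine ⟨max (x0 - δ/2) 0, ⟨le_max_right _ _, max_le (by linarith) hL.le⟩, ?_, ?_⟩
      · exact ne_of_lt (max_lt (by linarith) hL)
      · have h1 : max (x0 - δ/2) 0 < x0 := max_lt (by linarith) hL
        have h2 : x0 - max (x0 - δ/2) 0 ≤ δ/2 := by
          have := le_max_left (x0 - δ/2) 0; linarith
        rw [abs_of_neg (by linarith)]; linarith
  set a : ℝ := (ψ x1 - ψ x0) / (x1 - x0) with ha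
  have hsub : x1 - x0 ≠ 0 := sub_ne_zero.mpr hx1ne
  have hax : a * (x1 - x0) = ψ x1 - ψ x0 := by
    rw [ha]; field_simp
  have hsmall : |ψ x1 - ψ x0| < ε/2 := by
    have := hδ2 hx1mem (by rwa [Real.dist_eq]); rwa [Real.dist_eq] at this
  refine ⟨a, ψ x0 - a * x0 + ε, ?_, by linarith⟩
  intro x hx
  have goal_eq : a * x + (ψ x0 - a * x0 + ε) = ψ x0 + a * (x - x0) + ε := by ring
  rw [goal_eq]
  have hnear : |x - x0| ≤ |x1 - x0| → ψ x ≤ ψ x0 + a * (x - x0) + ε := by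
    intro hcl
    have h1 : ψ x - ψ x0 < ε/2 := by
      have := hδ2 hx (by rw [Real.dist_eq]; exact lt_of_le_of_lt hcl hx1close)
      rw [Real.dist_eq] at this
      exact lt_of_abs_lt this
    have h2 : |a * (x - x0)| ≤ ε/2 := by
      calc |a * (x - x0)| = |a| * |x - x0| := abs_mul _ _
        _ ≤ |a| * |x1 - x0| := by
            exact mul_le_mul_of_nonneg_left hcl (abs_nonneg _)
        _ = |a * (x1 - x0)| := (abs_mul _ _).symm
        _ = |ψ x1 - ψ x0| := by rw [hax]
        _ ≤ ε/2 := hsmall.le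
    have := neg_abs_le (a * (x - x0))
    linarith
  rcases lt_or_gt_of_ne hx1ne with hBA | hAB
  · -- x1 < x0
    rcases lt_trichotomy x x1 with hxx | hxx
    · -- x < x1 < x0
      have hs := hconc.slope_anti_adjacent hx hx0 hxx (lt_of_le_of_ne (le_of_lt hBA) (by exact hBA.ne))
      -- hs : (ψ x0 - ψ x1)/(x0 - x1) ≤ (ψ x1 - ψ x)/(x1 - x)
      have haeq : a = (ψ x0 - ψ x1) / (x0 - x1) := by
        rw [eq_div_iff (by intro hh; apply hsub; linarith)]
        linarith [hax]
      rw [← haeq] at hs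
      have hpos : (0:ℝ) < x1 - x := by linarith
      have hmul : a * (x1 - x) ≤ ψ x1 - ψ x := by
        have := (le_div_iff₀ hpos).mp hs; linarith
      have hr : a * (x1 - x0) - a * (x1 - x) = a * (x - x0) := by ring
      linarith [hax]
    · rcases hxx with hxx | hxx
      · exact hnear (le_of_eq (by rw [hxx]))
      · rcases lt_trichotomy x x0 with hy | hy
        · -- x1 < x < x0 : near
          apply hnear
          rw [abs_of_neg (by linarith), abs_of_neg (by linarith)]; linarith
        · rcases hy with hy | hy
          · apply hnear; rw [hy]; simp [abs_nonneg]
          · -- x1 < x0 < x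
            have hs := hconc.slope_anti_adjacent hx1mem hx hBA hy
            -- hs : (ψ x - ψ x0)/(x - x0) ≤ (ψ x0 - ψ x1)/(x0 - x1)
            have haeq : a = (ψ x0 - ψ x1) / (x0 - x1) := by
              rw [eq_div_iff (by intro hh; apply hsub; linarith)]
              linarith [hax]
            rw [← haeq] at hs
            have hpos : (0:ℝ) < x - x0 := by linarith
            have := (div_le_iff₀ hpos).mp hs
            linarith
  · -- x0 < x1
    rcases lt_trichotomy x x0 with hxx | hxx
    · -- x < x0 < x1
      have hs := hconc.slope_anti_adjacent hx hx1mem hxx hAB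
      -- hs : (ψ x1 - ψ x0)/(x1 - x0) ≤ (ψ x0 - ψ x)/(x0 - x)
      have hpos : (0:ℝ) < x0 - x := by linarith
      have := (le_div_iff₀ hpos).mp (ha ▸ hs)
      linarith
    · rcases hxx with hxx | hxx
      · apply hnear; rw [hxx]; simp [abs_nonneg]
      · rcases lt_trichotomy x x1 with hy | hy
        · apply hnear
          rw [abs_of_pos (by linarith), abs_of_pos (by linarith)]; linarith
        · rcases hy with hy | hy
          · exact hnear (le_of_eq (by rw [hy]))
          · -- x0 < x1 < x
            have hs := hconc.slope_anti_adjacent hx0 hx hAB hy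
            -- hs : (ψ x - ψ x1)/(x - x1) ≤ (ψ x1 - ψ x0)/(x1 - x0) = a
            have hpos : (0:ℝ) < x - x1 := by linarith
            have := (div_le_iff₀ hpos).mp (ha ▸ hs)
            have hr : a * (x - x1) + a * (x1 - x0) = a * (x - x0) := by ring
            linarith [hax]


/-- The smallest `p`-concave majorant admits a countable representation as the infimum of
rational affine transformations `a·p + b` of the scale function that majorize `U` and
have `b ≥ c`. -/
theorem Uc_countable_affine_representation (p U : ℝ → ℝ)
    (hpc : ContinuousOn p (Set.Icc 0 1)) (hpm : StrictMonoOn p (Set.Icc 0 1))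
    (hp0 : p 0 = 0)
    (hU : ContinuousOn U (Set.Icc 0 1))
    (c : ℝ) (hc : U 0 ≤ c) :
    (∃ a b : ℚ, c ≤ (b : ℝ) ∧ ∀ t ∈ Set.Icc (0:ℝ) 1, U t ≤ (a : ℝ) * p t + (b : ℝ)) ∧
    (∀ r ∈ Set.Icc (0:ℝ) 1,
      Uc p U c r = sInf {y : ℝ | ∃ a b : ℚ, c ≤ (b : ℝ) ∧
        (∀ t ∈ Set.Icc (0:ℝ) 1, U t ≤ (a : ℝ) * p t + (b : ℝ)) ∧
        y = (a : ℝ) * p r + (b : ℝ)}) := by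
  have h01 : (0:ℝ) ∈ Set.Icc (0:ℝ) 1 := by constructor <;> norm_num
  have h11 : (1:ℝ) ∈ Set.Icc (0:ℝ) 1 := by constructor <;> norm_num
  have hL : 0 < p 1 := by
    have := hpm h01 h11 one_pos
    rwa [hp0] at this
  have hmono := hpm.monotoneOn
  have hpt0 : ∀ t ∈ Set.Icc (0:ℝ) 1, 0 ≤ p t := by
    intro t ht
    have := hmono h01 ht ht.1
    rwa [hp0] at this
  have hptL : ∀ t ∈ Set.Icc (0:ℝ) 1, p t ≤ p 1 := fun t ht => hmono ht h11 ht.2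
  have hpmem : ∀ t ∈ Set.Icc (0:ℝ) 1, p t ∈ Set.Icc 0 (p 1) :=
    fun t ht => ⟨hpt0 t ht, hptL t ht⟩
  -- part 1
  obtain ⟨M, hM⟩ := (isCompact_Icc.image_of_continuousOn hU).bddAbove
  have hM' : ∀ t ∈ Set.Icc (0:ℝ) 1, U t ≤ M := fun t ht => hM ⟨t, ht, rfl⟩
  obtain ⟨b0, hb0⟩ := exists_rat_gt (max M c)
  have part1 : ∃ a b : ℚ, c ≤ (b : ℝ) ∧
      ∀ t ∈ Set.Icc (0:ℝ) 1, U t ≤ (a : ℝ) * p t + (b : ℝ) := by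
    refine ⟨0, b0, le_of_lt (lt_of_le_of_lt (le_max_right M c) hb0), fun t ht => ?_⟩
    push_cast
    have := le_max_left M c
    have := hM' t ht
    nlinarith
  refine ⟨part1, fun r hr => ?_⟩
  set T : Set ℝ := {y : ℝ | ∃ a b : ℚ, c ≤ (b : ℝ) ∧
      (∀ t ∈ Set.Icc (0:ℝ) 1, U t ≤ (a : ℝ) * p t + (b : ℝ)) ∧
      y = (a : ℝ) * p r + (b : ℝ)} with hT
  set S : Set ℝ := {y : ℝ | ∃ φ : ℝ → ℝ, PConcave p φ ∧
      (∀ t ∈ Set.Icc (0:ℝ) 1, U t ≤ φ t) ∧ c ≤ φ 0 ∧ y = φ r} with hS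
  have hTS : T ⊆ S := by
    rintro y ⟨a, b, hcb, hmaj, rfl⟩
    refine ⟨fun t => (a:ℝ) * p t + b, ⟨fun x => (a:ℝ) * x + b, ?_, ?_, fun s _ => rfl⟩,
      hmaj, ?_, rfl⟩
    · exact (Continuous.continuousOn (by continuity))
    · exact affine_concave _ _ _ (convex_Icc _ _)
    · simp only []; rw [hp0]; simpa using hcb
  have hTne : T.Nonempty := by
    obtain ⟨a, b, h1, h2⟩ := part1
    exact ⟨(a:ℝ) * p r + b, a, b, h1, h2, rfl⟩
  have hTbdd : BddBelow T := by
    refine ⟨U r, ?_⟩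
    rintro y ⟨a, b, hcb, hmaj, rfl⟩
    exact hmaj r hr
  have hSbdd : BddBelow S := by
    refine ⟨U r, ?_⟩
    rintro y ⟨φ, _, hmaj, _, rfl⟩
    exact hmaj r hr
  have hSne : S.Nonempty := ⟨_, hTS hTne.choose_spec⟩
  rw [Uc]
  apply le_antisymm
  · exact csInf_le_csInf hSbdd hTne hTS
  · apply le_csInf hSne
    rintro y ⟨φ, ⟨ψ, hψc, hψconc, hψeq⟩, hmaj, hφ0, rfl⟩
    apply le_of_forall_pos_le_add
    intro ε hε
    obtain ⟨a, b, hln, hval⟩ := exists_affine_majorant ψ (p 1) hL hψc hψconc (p r)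
      (hpmem r hr) (ε/4) (by linarith)
    -- affine line majorizes U and b ≥ c
    have hlinU : ∀ t ∈ Set.Icc (0:ℝ) 1, U t ≤ a * p t + b := by
      intro t ht
      calc U t ≤ φ t := hmaj t ht
        _ = ψ (p t) := hψeq t ht
        _ ≤ a * p t + b := hln _ (hpmem t ht)
    have hbc : c ≤ b := by
      have h0m : (0:ℝ) ∈ Set.Icc 0 (p 1) := ⟨le_refl _, hL.le⟩
      have := hln 0 h0m
      have hφ0eq : φ 0 = ψ (p 0) := hψeq 0 h01
      rw [hp0] at hφ0eq
      simp only [mul_zero, zero_add] at this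
      linarith
    -- rationalize
    obtain ⟨a', ha1, ha2⟩ := exists_rat_btwn (show a < a + ε/(4*(p 1 + 1)) by
      have : 0 < ε/(4*(p 1 + 1)) := by positivity
      linarith)
    obtain ⟨b', hb1, hb2⟩ := exists_rat_btwn (show b < b + ε/4 by linarith)
    have hmemT : (a':ℝ) * p r + (b':ℝ) ∈ T := by
      refine ⟨a', b', le_of_lt (lt_of_le_of_lt hbc hb1), fun t ht => ?_, rfl⟩
      have h1 := hlinU t ht
      have h2 : a * p t ≤ (a':ℝ) * p t :=
        mul_le_mul_of_nonneg_right ha1.le (hpt0 t ht)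
      linarith
    have hclose : (a':ℝ) * p r + (b':ℝ) ≤ φ r + ε := by
      have hp1 : ((a':ℝ) - a) * p r ≤ ε/4 := by
        have h1 : ((a':ℝ) - a) * p r ≤ (ε/(4*(p 1 + 1))) * p 1 := by
          apply mul_le_mul (by linarith) (hptL r hr) (hpt0 r hr) (by positivity)
        have h2 : (ε/(4*(p 1 + 1))) * p 1 ≤ ε/4 := by
          rw [div_mul_eq_mul_div, div_le_div_iff₀ (by positivity) (by norm_num)]
          nlinarith
        linarith
      have hφr : φ r = ψ (p r) := hψeq r hr
      nlinarith [hb2, hval, hp1]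
    calc sInf T ≤ (a':ℝ) * p r + (b':ℝ) := csInf_le hTbdd hmemT
      _ ≤ φ r + ε := hclose
end

section
/- Let U* := max_{r ∈ [0,1]} U(r), λ := min{ r ∈ [0,1] : U(r) = U* } and ϱ := max{ r ∈ [0,1] : U(r) = U* }, let c ≥ U(0), and set W := U⁽ᶜ⁾. Then: (i) if c < U*, then W = U* on [λ,ϱ], W is nondecreasing on [0,λ] (equivalently its left derivatives are ≥ 0 on (0,λ)), and W is nonincreasing on [ϱ,1] (its left derivatives are ≤ 0 on (ϱ,1)); (ii) if c = U*, then W = U* on [0,ϱ] and W is nonincreasing on [ϱ,1]; (iii) if c > U*, then W is nonincreasing on [0,1]. -/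
open scoped Classical

/-- Monotonicity structure of `W = U⁽ᶜ⁾` relative to the maximum `U*` of the reward and
the left-most and right-most locations `λ`, `ϱ` where this maximum is attained. -/
theorem Uc_monotonicity_structure (p U : ℝ → ℝ)
    (hpc : ContinuousOn p (Set.Icc 0 1)) (hpm : StrictMonoOn p (Set.Icc 0 1))
    (hp0 : p 0 = 0)
    (hU : ContinuousOn U (Set.Icc 0 1))
    (c : ℝ) (hc : U 0 ≤ c)
    (Ustar lam rho : ℝ)
    (hUstar : Ustar = sSup (U '' Set.Icc (0:ℝ) 1))
    (hlam : lam = sInf {r ∈ Set.Icc (0:ℝ) 1 | U r = Ustar})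
    (hrho : rho = sSup {r ∈ Set.Icc (0:ℝ) 1 | U r = Ustar}) :
    (c < Ustar →
      (∀ r ∈ Set.Icc lam rho, Uc p U c r = Ustar) ∧
      MonotoneOn (Uc p U c) (Set.Icc 0 lam) ∧
      AntitoneOn (Uc p U c) (Set.Icc rho 1)) ∧
    (c = Ustar →
      (∀ r ∈ Set.Icc (0:ℝ) rho, Uc p U c r = Ustar) ∧
      AntitoneOn (Uc p U c) (Set.Icc rho 1)) ∧
    (Ustar < c → AntitoneOn (Uc p U c) (Set.Icc 0 1)) := by
  -- basic setup
  have h01 : (0:ℝ) ∈ Set.Icc (0:ℝ) 1 := by norm_num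
  have h11 : (1:ℝ) ∈ Set.Icc (0:ℝ) 1 := by norm_num
  -- maximum attained
  obtain ⟨x₀, hx₀, hmax⟩ := isCompact_Icc.exists_isMaxOn ⟨0, h01⟩ hU
  have hgreat : IsGreatest (U '' Set.Icc (0:ℝ) 1) (U x₀) :=
    ⟨⟨x₀, hx₀, rfl⟩, by rintro y ⟨t, ht, rfl⟩; exact hmax ht⟩
  have hUx₀ : U x₀ = Ustar := by rw [hUstar, hgreat.csSup_eq.symm]
  have hUle : ∀ t ∈ Set.Icc (0:ℝ) 1, U t ≤ Ustar := fun t ht => hUx₀ ▸ hmax ht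
  -- the set of maximizers
  set T : Set ℝ := {r ∈ Set.Icc (0:ℝ) 1 | U r = Ustar} with hT
  have hTne : T.Nonempty := ⟨x₀, hx₀, hUx₀⟩
  have hTsub : T ⊆ Set.Icc 0 1 := fun r hr => hr.1
  have hTclosed : IsClosed T :=
    hU.preimage_isClosed_of_isClosed isClosed_Icc (isClosed_singleton (x := Ustar))
  have hTcompact : IsCompact T := isCompact_Icc.of_isClosed_subset hTclosed hTsub
  have hlamT : lam ∈ T := by rw [hlam]; exact hTcompact.sInf_mem hTne
  have hrhoT : rho ∈ T := by rw [hrho]; exact hTcompact.sSup_mem hTne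
  have hlam01 : lam ∈ Set.Icc (0:ℝ) 1 := hTsub hlamT
  have hrho01 : rho ∈ Set.Icc (0:ℝ) 1 := hTsub hrhoT
  have hUlam : U lam = Ustar := hlamT.2
  have hUrho : U rho = Ustar := hrhoT.2
  have hlr : lam ≤ rho := by
    rw [hlam, hrho]
    exact csInf_le_csSup hTne (hTcompact.bddBelow) (hTcompact.bddAbove)
  -- p facts
  have hpmem : ∀ t ∈ Set.Icc (0:ℝ) 1, p t ∈ Set.Icc (0:ℝ) (p 1) := by
    intro t ht
    constructor
    · rw [← hp0]; exact hpm.monotoneOn h01 ht ht.1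
    · exact hpm.monotoneOn ht h11 ht.2
  -- admissible set
  set S : ℝ → Set ℝ := fun r => {y : ℝ | ∃ φ : ℝ → ℝ, PConcave p φ ∧
    (∀ t ∈ Set.Icc (0:ℝ) 1, U t ≤ φ t) ∧ c ≤ φ 0 ∧ y = φ r} with hS
  have hUcdef : ∀ r, Uc p U c r = sInf (S r) := fun r => rfl
  -- key concavity inequality
  have key : ∀ φ : ℝ → ℝ, PConcave p φ → ∀ a b r : ℝ, a ∈ Set.Icc (0:ℝ) 1 →
      b ∈ Set.Icc (0:ℝ) 1 → r ∈ Set.Icc a b → min (φ a) (φ b) ≤ φ r := by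
    rintro φ ⟨ψ, _, hψconc, hψeq⟩ a b r ha hb hr
    have hr01 : r ∈ Set.Icc (0:ℝ) 1 := ⟨le_trans ha.1 hr.1, le_trans hr.2 hb.2⟩
    have hab : a ≤ b := le_trans hr.1 hr.2
    have h1 : p a ≤ p r := hpm.monotoneOn ha hr01 hr.1
    have h2 : p r ≤ p b := hpm.monotoneOn hr01 hb hr.2
    have hseg : p r ∈ segment ℝ (p a) (p b) := by
      rw [segment_eq_Icc (le_trans h1 h2)]; exact ⟨h1, h2⟩
    have := hψconc.ge_on_segment (hpmem a ha) (hpmem b hb) hseg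
    rw [hψeq a ha, hψeq b hb, hψeq r hr01]
    exact this
  -- constants are admissible
  have hconst : ∀ κ : ℝ, Ustar ≤ κ → c ≤ κ → ∀ r, κ ∈ S r := by
    intro κ h1 h2 r
    refine ⟨fun _ => κ, ⟨fun _ => κ, continuousOn_const, concaveOn_const κ (convex_Icc _ _),
      fun _ _ => rfl⟩, fun t ht => le_trans (hUle t ht) h1, h2, rfl⟩
  have hSne : ∀ r, (S r).Nonempty := fun r =>
    ⟨max c Ustar, hconst _ (le_max_right _ _) (le_max_left _ _) r⟩
  have hSbdd : ∀ r ∈ Set.Icc (0:ℝ) 1, BddBelow (S r) := by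
    rintro r hr
    refine ⟨U r, ?_⟩
    rintro y ⟨φ, hφ, hmaj, hφ0, rfl⟩
    exact hmaj r hr
  -- Uc ≤ φ r for admissible φ, r ∈ [0,1]
  have hUc_le : ∀ r ∈ Set.Icc (0:ℝ) 1, ∀ φ : ℝ → ℝ, PConcave p φ →
      (∀ t ∈ Set.Icc (0:ℝ) 1, U t ≤ φ t) → c ≤ φ 0 → Uc p U c r ≤ φ r := by
    intro r hr φ h1 h2 h3
    exact csInf_le (hSbdd r hr) ⟨φ, h1, h2, h3, rfl⟩
  have hUc_le_const : ∀ κ : ℝ, Ustar ≤ κ → c ≤ κ → ∀ r ∈ Set.Icc (0:ℝ) 1,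
      Uc p U c r ≤ κ := fun κ h1 h2 r hr => csInf_le (hSbdd r hr) (hconst κ h1 h2 r)
  have hle_Uc : ∀ r b : ℝ, (∀ φ : ℝ → ℝ, PConcave p φ →
      (∀ t ∈ Set.Icc (0:ℝ) 1, U t ≤ φ t) → c ≤ φ 0 → b ≤ φ r) → b ≤ Uc p U c r := by
    intro r b hb
    refine le_csInf (hSne r) ?_
    rintro y ⟨φ, h1, h2, h3, rfl⟩
    exact hb φ h1 h2 h3
  refine ⟨?_, ?_, ?_⟩
  · -- case c < Ustar
    intro hcU
    have hcU' : c ≤ Ustar := hcU.le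
    refine ⟨?_, ?_, ?_⟩
    · intro r hr
      have hr01 : r ∈ Set.Icc (0:ℝ) 1 := ⟨le_trans hlam01.1 hr.1, le_trans hr.2 hrho01.2⟩
      refine le_antisymm (hUc_le_const Ustar le_rfl hcU' r hr01) ?_
      refine hle_Uc r Ustar ?_
      intro φ h1 h2 h3
      have := key φ h1 lam rho r hlam01 hrho01 hr
      have hl : Ustar ≤ φ lam := hUlam ▸ h2 lam hlam01
      have hrr : Ustar ≤ φ rho := hUrho ▸ h2 rho hrho01
      exact le_trans (le_min hl hrr) this
    · -- monotone on [0, lam]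
      intro r hr s hs hrs
      have hr01 : r ∈ Set.Icc (0:ℝ) 1 := ⟨hr.1, le_trans hr.2 hlam01.2⟩
      have hs01 : s ∈ Set.Icc (0:ℝ) 1 := ⟨hs.1, le_trans hs.2 hlam01.2⟩
      refine le_csInf (hSne s) ?_
      rintro y ⟨φ, h1, h2, h3, rfl⟩
      have := key φ h1 r lam s hr01 hlam01 ⟨hrs, hs.2⟩
      rcases min_le_iff.mp this with h | h
      · exact le_trans (hUc_le r hr01 φ h1 h2 h3) h
      · have : Ustar ≤ φ s := le_trans (hUlam ▸ h2 lam hlam01) h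
        exact le_trans (hUc_le_const Ustar le_rfl hcU' r hr01) this
    · -- antitone on [rho, 1]
      intro r hr s hs hrs
      have hr01 : r ∈ Set.Icc (0:ℝ) 1 := ⟨le_trans hrho01.1 hr.1, hr.2⟩
      have hs01 : s ∈ Set.Icc (0:ℝ) 1 := ⟨le_trans hrho01.1 hs.1, hs.2⟩
      refine le_csInf (hSne r) ?_
      rintro y ⟨φ, h1, h2, h3, rfl⟩
      have := key φ h1 rho s r hrho01 hs01 ⟨hr.1, hrs⟩
      rcases min_le_iff.mp this with h | h
      · have : Ustar ≤ φ r := le_trans (hUrho ▸ h2 rho hrho01) h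
        exact le_trans (hUc_le_const Ustar le_rfl hcU' s hs01) this
      · exact le_trans (hUc_le s hs01 φ h1 h2 h3) h
  · -- case c = Ustar
    intro hcU
    refine ⟨?_, ?_⟩
    · intro r hr
      have hr01 : r ∈ Set.Icc (0:ℝ) 1 := ⟨hr.1, le_trans hr.2 hrho01.2⟩
      refine le_antisymm (hUc_le_const Ustar le_rfl hcU.le r hr01) ?_
      refine hle_Uc r Ustar ?_
      intro φ h1 h2 h3
      have := key φ h1 0 rho r h01 hrho01 hr
      have hl : Ustar ≤ φ 0 := hcU ▸ h3
      have hrr : Ustar ≤ φ rho := hUrho ▸ h2 rho hrho01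
      exact le_trans (le_min hl hrr) this
    · intro r hr s hs hrs
      have hr01 : r ∈ Set.Icc (0:ℝ) 1 := ⟨le_trans hrho01.1 hr.1, hr.2⟩
      have hs01 : s ∈ Set.Icc (0:ℝ) 1 := ⟨le_trans hrho01.1 hs.1, hs.2⟩
      refine le_csInf (hSne r) ?_
      rintro y ⟨φ, h1, h2, h3, rfl⟩
      have := key φ h1 rho s r hrho01 hs01 ⟨hr.1, hrs⟩
      rcases min_le_iff.mp this with h | h
      · have : Ustar ≤ φ r := le_trans (hUrho ▸ h2 rho hrho01) h
        exact le_trans (hUc_le_const Ustar le_rfl hcU.le s hs01) this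
      · exact le_trans (hUc_le s hs01 φ h1 h2 h3) h
  · -- case Ustar < c
    intro hcU
    intro r hr s hs hrs
    refine le_csInf (hSne r) ?_
    rintro y ⟨φ, h1, h2, h3, rfl⟩
    have := key φ h1 0 s r h01 hs ⟨hr.1, hrs⟩
    rcases min_le_iff.mp this with h | h
    · have : c ≤ φ r := le_trans h3 h
      exact le_trans (hUc_le_const c hcU.le le_rfl s hs) this
    · exact le_trans (hUc_le s hs φ h1 h2 h3) h
end
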